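/- In the two-peakon system with z = q_1 - q_2 > 0 and h = p_1 - p_2, the identity 4H_1 - H_0² = H_0² exp(-z) + h²(1 - exp(-z)) holds, and hence 4H_1 - H_0² > 0 whenever (H_0, h) ≠ (0,0); moreover h satisfies ḣ = (1/2)(4H_1 - H_0² - h²) along the flow. -/

import Mathlib

/-- For the two-peakon system with `z = q₁ - q₂ > 0`, `h = p₁ - p₂`,
`H₀ = p₁ + p₂`, `H₁ = (1/2)(p₁² + p₂² + 2p₁p₂ e^{-z})`:
the identity `4H₁ - H₀² = H₀² e^{-z} + h²(1 - e^{-z})` holds; hence `4H₁ - H₀² > 0`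
whenever `(H₀, h) ≠ (0,0)`; and along the Hamiltonian flow
(`ṗ₁ = p₁ p₂ e^{-z}`, `ṗ₂ = -p₁ p₂ e^{-z}`) one has `ḣ = (1/2)(4H₁ - H₀² - h²)`. -/
theorem twopeakon_h_identity_and_ode (z p₁ p₂ : ℝ → ℝ)
    (hz : ∀ t, z t > 0)
    (hp₁ : ∀ t, HasDerivAt p₁ (p₁ t * p₂ t * Real.exp (-(z t))) t)
    (hp₂ : ∀ t, HasDerivAt p₂ (-(p₁ t * p₂ t * Real.exp (-(z t)))) t) :
    ∀ t : ℝ,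
      (4 * ((1/2) * ((p₁ t)^2 + (p₂ t)^2 + 2 * p₁ t * p₂ t * Real.exp (-(z t))))
          - (p₁ t + p₂ t)^2
        = (p₁ t + p₂ t)^2 * Real.exp (-(z t))
          + (p₁ t - p₂ t)^2 * (1 - Real.exp (-(z t)))) ∧
      (¬(p₁ t + p₂ t = 0 ∧ p₁ t - p₂ t = 0) →
        0 < 4 * ((1/2) * ((p₁ t)^2 + (p₂ t)^2 + 2 * p₁ t * p₂ t * Real.exp (-(z t))))
          - (p₁ t + p₂ t)^2) ∧
      HasDerivAt (fun s => p₁ s - p₂ s)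
        ((1/2) * (4 * ((1/2) * ((p₁ t)^2 + (p₂ t)^2
            + 2 * p₁ t * p₂ t * Real.exp (-(z t))))
          - (p₁ t + p₂ t)^2 - (p₁ t - p₂ t)^2)) t := by
  intro t
  have he : Real.exp (-(z t)) < 1 := by
    rw [Real.exp_lt_one_iff]; linarith [hz t]
  have hep : 0 < Real.exp (-(z t)) := Real.exp_pos _
  refine ⟨by ring, ?_, ?_⟩
  · intro hne
    have h1 : 0 < (p₁ t + p₂ t)^2 ∨ 0 < (p₁ t - p₂ t)^2 := by
      rcases not_and_or.mp hne with h | h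
      · exact Or.inl (by positivity)
      · exact Or.inr (by positivity)
    have key : 4 * ((1/2) * ((p₁ t)^2 + (p₂ t)^2 + 2 * p₁ t * p₂ t * Real.exp (-(z t))))
          - (p₁ t + p₂ t)^2
        = (p₁ t + p₂ t)^2 * Real.exp (-(z t))
          + (p₁ t - p₂ t)^2 * (1 - Real.exp (-(z t))) := by ring
    rw [key]
    rcases h1 with h | h
    · nlinarith [sq_nonneg (p₁ t - p₂ t)]
    · nlinarith [sq_nonneg (p₁ t + p₂ t)]
  · have : HasDerivAt (fun s => p₁ s - p₂ s) _ t := (hp₁ t).sub (hp₂ t)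
    convert this using 1
    ring
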